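/- Fix λ > 1 and let I ⊆ I′ be compact intervals with ℓ(I′) ≤ λ·ℓ(I). If β_φ(I′) ≤ 1/4, then |γ(I)/γ(I′) − 1| ≤ 8λ·β_φ(I′), where γ(·) denotes the slope of the L∞ best affine estimator of φ on the respective interval. -/

import Mathlib

/-- The L∞ error of the affine function `x ↦ γ x + δ` as an approximation of `φ` on `[a,b]`. -/
noncomputable def supErr (φ : ℝ → ℝ) (a b γ δ : ℝ) : ℝ :=
  sSup ((fun x => |φ x - (γ * x + δ)|) '' Set.Icc a b)

lemma supErr_ge (φ : ℝ → ℝ) (a b γ δ x : ℝ) (hφ : ContinuousOn φ (Set.Icc a b))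
    (hx : x ∈ Set.Icc a b) : |φ x - (γ * x + δ)| ≤ supErr φ a b γ δ := by
  apply le_csSup
  · exact (isCompact_Icc.image_of_continuousOn
      ((hφ.sub (((continuous_const.mul continuous_id).add continuous_const).continuousOn)).abs)).bddAbove
  · exact ⟨x, hx, rfl⟩

lemma supErr_mono (φ : ℝ → ℝ) (a b c d γ δ : ℝ) (hcd : c ≤ d)
    (hsub : Set.Icc c d ⊆ Set.Icc a b) (hφ : ContinuousOn φ (Set.Icc a b)) :
    supErr φ c d γ δ ≤ supErr φ a b γ δ := by
  apply csSup_le_csSup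
  · exact (isCompact_Icc.image_of_continuousOn
      ((hφ.sub (((continuous_const.mul continuous_id).add continuous_const).continuousOn)).abs)).bddAbove
  · exact ((Set.nonempty_Icc.mpr hcd)).image _
  · exact Set.image_mono hsub

/-- Lemma 3.1.8: if `I = [c,d] ⊆ I' = [a,b]` with `ℓ(I') ≤ λ ℓ(I)` and
`β_φ(I') ≤ 1/4`, then `|γ(I)/γ(I') - 1| ≤ 8 λ β_φ(I')`, where `γ(J)` denotes
the slope of the L∞ best affine estimator of `φ` over `J`. -/
theorem stmt3 (φ : ℝ → ℝ) (a b c d lam : ℝ) (hlam : 1 < lam)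
    (hab : a < b) (hcd : c < d)
    (hsub : Set.Icc c d ⊆ Set.Icc a b)
    (hlen : b - a ≤ lam * (d - c))
    (hφc : ContinuousOn φ (Set.Icc a b))
    (hφm : StrictMonoOn φ (Set.Icc a b))
    (γI δI γI' δI' : ℝ)
    (hbestI : ∀ γ' δ' : ℝ, supErr φ c d γI δI ≤ supErr φ c d γ' δ')
    (hbestI' : ∀ γ' δ' : ℝ, supErr φ a b γI' δI' ≤ supErr φ a b γ' δ')
    (hpos : 0 < γI')
    (hβ : supErr φ a b γI' δI' / (φ b - φ a) ≤ 1 / 4) :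
    |γI / γI' - 1| ≤ 8 * lam * (supErr φ a b γI' δI' / (φ b - φ a)) := by
  set E' := supErr φ a b γI' δI' with hE'def
  have ha : a ∈ Set.Icc a b := Set.left_mem_Icc.mpr hab.le
  have hb : b ∈ Set.Icc a b := Set.right_mem_Icc.mpr hab.le
  have hL : 0 < φ b - φ a := sub_pos.mpr (hφm ha hb hab)
  have hdc : 0 < d - c := sub_pos.mpr hcd
  -- pointwise bounds for the I'-fit on [a,b]
  have hE' : ∀ x ∈ Set.Icc a b, |φ x - (γI' * x + δI')| ≤ E' :=
    fun x hx => supErr_ge φ a b γI' δI' x hφc hx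
  -- the I-fit error is at most E'
  have hφc' : ContinuousOn φ (Set.Icc c d) := hφc.mono hsub
  have hEE' : supErr φ c d γI δI ≤ E' :=
    (hbestI γI' δI').trans (supErr_mono φ a b c d γI' δI' hcd.le hsub hφc)
  have hE : ∀ x ∈ Set.Icc c d, |φ x - (γI * x + δI)| ≤ E' :=
    fun x hx => (supErr_ge φ c d γI δI x hφc' hx).trans hEE'
  -- E' ≥ 0
  have hE'0 : 0 ≤ E' := (abs_nonneg _).trans (hE' a ha)
  -- slope difference bound
  have hc' : c ∈ Set.Icc c d := Set.left_mem_Icc.mpr hcd.le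
  have hd' : d ∈ Set.Icc c d := Set.right_mem_Icc.mpr hcd.le
  have hdiff : ∀ x ∈ Set.Icc c d, |(γI - γI') * x + (δI - δI')| ≤ 2 * E' := by
    intro x hx
    have h1 := hE x hx
    have h2 := hE' x (hsub hx)
    have : (γI - γI') * x + (δI - δI') =
        (φ x - (γI' * x + δI')) - (φ x - (γI * x + δI)) := by ring
    rw [this]
    calc |(φ x - (γI' * x + δI')) - (φ x - (γI * x + δI))|
        ≤ |φ x - (γI' * x + δI')| + |φ x - (γI * x + δI)| := abs_sub _ _
      _ ≤ 2 * E' := by linarith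
  have h1 : |γI - γI'| * (d - c) ≤ 4 * E' := by
    have hcb := hdiff c hc'
    have hdb := hdiff d hd'
    have : (γI - γI') * (d - c) =
        ((γI - γI') * d + (δI - δI')) - ((γI - γI') * c + (δI - δI')) := by ring
    calc |γI - γI'| * (d - c) = |(γI - γI') * (d - c)| := by
          rw [abs_mul, abs_of_pos hdc]
      _ ≤ |(γI - γI') * d + (δI - δI')| + |(γI - γI') * c + (δI - δI')| := by
          rw [this]; exact abs_sub _ _
      _ ≤ 4 * E' := by linarith
  -- length bound: φ b - φ a ≤ 2 λ γI' (d - c)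
  have hEL : E' ≤ (φ b - φ a) / 4 := by
    rw [div_le_div_iff₀ hL (by norm_num : (0:ℝ) < 4)] at hβ
    linarith
  have h2 : φ b - φ a ≤ 2 * lam * γI' * (d - c) := by
    have hba := hE' b hb
    have haa := hE' a ha
    have hba' : φ b - (γI' * b + δI') ≤ E' := (le_abs_self _).trans hba
    have haa' : (γI' * a + δI') - φ a ≤ E' := (neg_le_abs _).trans_eq' (by ring_nf) |>.trans haa
    have hgb : (φ b - φ a) / 2 ≤ γI' * (b - a) := by linarith
    have : γI' * (b - a) ≤ γI' * (lam * (d - c)) :=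
      mul_le_mul_of_nonneg_left hlen hpos.le
    nlinarith
  -- combine
  have key : |γI - γI'| * (φ b - φ a) ≤ 8 * lam * E' * γI' := by
    have t1 := mul_le_mul_of_nonneg_left h2 (abs_nonneg (γI - γI'))
    have t2 := mul_le_mul_of_nonneg_left h1
      (by positivity : (0:ℝ) ≤ 2 * lam * γI')
    nlinarith
  have heq : γI / γI' - 1 = (γI - γI') / γI' := by field_simp
  rw [heq, abs_div, abs_of_pos hpos, div_le_iff₀ hpos]
  have : 8 * lam * (E' / (φ b - φ a)) * γI' = (8 * lam * E' * γI') / (φ b - φ a) := by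
    field_simp
  rw [this, le_div_iff₀ hL]
  exact key
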